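/- Let Y₁ and Y₂ be independent real random variables on a probability space such that Y₁ has probability density f_{m₁,ν₁} and Y₂ has probability density f_{m₂,ν₂} (with respect to Lebesgue measure), where m₁, m₂, ν₁, ν₂ > 0. Then the pair (U, W) = (Y₁ + Y₂, Y₁/(Y₁ + Y₂)) has joint probability density (with respect to two-dimensional Lebesgue measure) equal to h(u,w) = K₀ · u^{(m₁+m₂)/2−1} · w^{m₁/2−1} · (1−w)^{m₂/2−1} · (1 + m₁uw/ν₁)^{−(m₁+ν₁)/2} · (1 + m₂u(1−w)/ν₂)^{−(m₂+ν₂)/2} for u > 0 and 0 < w < 1, and 0 elsewhere, where K₀ = (m₁/ν₁)^{m₁/2}(m₂/ν₂)^{m₂/2} / (B(m₁/2, ν₁/2) · B(m₂/2, ν₂/2)). -/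

import Mathlib

open Real MeasureTheory Set ProbabilityTheory

/-- Beta function `B(a,b) = Γ(a)Γ(b)/Γ(a+b)`. -/
noncomputable def Beta (a b : ℝ) : ℝ := Gamma a * Gamma b / Gamma (a + b)

/-- The Fisher–Snedecor F-density with `m` numerator and `ν` denominator degrees of freedom. -/
noncomputable def fDens (m ν : ℝ) (y : ℝ) : ℝ :=
  if 0 < y then
    (1 / Beta (m / 2) (ν / 2)) * (m / ν) ^ (m / 2) * y ^ (m / 2 - 1) *
      (1 + m * y / ν) ^ (-(m + ν) / 2)
  else 0

/-- The joint density `h(u,w)` of `(U, W) = (Y₁ + Y₂, Y₁/(Y₁+Y₂))`. -/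
noncomputable def hDens (m₁ m₂ ν₁ ν₂ : ℝ) (u w : ℝ) : ℝ :=
  if 0 < u ∧ 0 < w ∧ w < 1 then
    ((m₁ / ν₁) ^ (m₁ / 2) * (m₂ / ν₂) ^ (m₂ / 2) /
        (Beta (m₁ / 2) (ν₁ / 2) * Beta (m₂ / 2) (ν₂ / 2))) *
      u ^ ((m₁ + m₂) / 2 - 1) * w ^ (m₁ / 2 - 1) * (1 - w) ^ (m₂ / 2 - 1) *
      (1 + m₁ * u * w / ν₁) ^ (-(m₁ + ν₁) / 2) *
      (1 + m₂ * u * (1 - w) / ν₂) ^ (-(m₂ + ν₂) / 2)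
  else 0

open scoped ENNReal

lemma Beta_pos' {a b : ℝ} (ha : 0 < a) (hb : 0 < b) : 0 < Beta a b :=
  div_pos (mul_pos (Real.Gamma_pos_of_pos ha) (Real.Gamma_pos_of_pos hb))
    (Real.Gamma_pos_of_pos (by linarith))

lemma fDens_nonneg {m ν : ℝ} (hm : 0 < m) (hν : 0 < ν) (y : ℝ) : 0 ≤ fDens m ν y := by
  unfold fDens
  split_ifs with h
  · have hB := Beta_pos' (by linarith : (0:ℝ) < m/2) (by linarith : (0:ℝ) < ν/2)
    positivity
  · exact le_refl _

lemma fDens_measurable (m ν : ℝ) : Measurable (fDens m ν) := by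
  unfold fDens
  apply Measurable.ite measurableSet_Ioi _ measurable_const
  fun_prop

lemma fDens_eq_zero {m ν y : ℝ} (hy : ¬ 0 < y) : fDens m ν y = 0 := if_neg hy

lemma prod_withDensity_aux {f g : ℝ → ℝ≥0∞} (hf : Measurable f) (hg : Measurable g)
    [SigmaFinite (volume.withDensity f)] [SigmaFinite (volume.withDensity g)] :
    (volume.withDensity f).prod (volume.withDensity g) =
      ((volume : Measure ℝ).prod volume).withDensity (fun p => f p.1 * g p.2) := by
  refine Measure.prod_eq fun s t hs ht => ?_
  rw [withDensity_apply _ (hs.prod ht), ← Measure.prod_restrict,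
    lintegral_prod_mul (hf.aemeasurable) (hg.aemeasurable),
    withDensity_apply _ hs, withDensity_apply _ ht]

noncomputable def Sfun : ℝ × ℝ → ℝ × ℝ := fun q => (q.1 * q.2, q.1 * (1 - q.2))

noncomputable def Sder (q : ℝ × ℝ) : ℝ × ℝ →L[ℝ] ℝ × ℝ :=
  LinearMap.toContinuousLinearMap (Matrix.toLin (Module.Basis.finTwoProd ℝ) (Module.Basis.finTwoProd ℝ)
    !![q.2, q.1; 1 - q.2, -q.1])

lemma hasFDerivAt_Sfun (q : ℝ × ℝ) : HasFDerivAt Sfun (Sder q) q := by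
  unfold Sder
  rw [Matrix.toLin_finTwoProd_toContinuousLinearMap]
  have h1 : HasFDerivAt (fun q : ℝ × ℝ => q.1 * q.2)
      (q.2 • ContinuousLinearMap.fst ℝ ℝ ℝ + q.1 • ContinuousLinearMap.snd ℝ ℝ ℝ) q := by
    rw [add_comm]; exact (hasFDerivAt_fst (𝕜 := ℝ) (p := q)).mul hasFDerivAt_snd
  have h2 : HasFDerivAt (fun q : ℝ × ℝ => q.1 * (1 - q.2))
      ((1 - q.2) • ContinuousLinearMap.fst ℝ ℝ ℝ + (-q.1) • ContinuousLinearMap.snd ℝ ℝ ℝ) q := by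
    have := (hasFDerivAt_fst (𝕜 := ℝ) (p := q)).mul
      ((hasFDerivAt_const (1:ℝ) q).sub hasFDerivAt_snd)
    refine this.congr_fderiv ?_
    simp [smul_sub, sub_smul, smul_smul, neg_smul]
    module
  exact h1.prodMk h2

lemma Sder_det (q : ℝ × ℝ) : (Sder q).det = -q.1 := by
  unfold Sder
  simp only [LinearMap.det_toContinuousLinearMap, LinearMap.det_toLin, Matrix.det_fin_two_of]
  ring

lemma key_identity {m₁ m₂ ν₁ ν₂ : ℝ} (hm₁ : 0 < m₁) (hm₂ : 0 < m₂) (hν₁ : 0 < ν₁) (hν₂ : 0 < ν₂)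
    {u w : ℝ} (hu : 0 < u) (hw : 0 < w) (hw1 : w < 1) :
    u * fDens m₁ ν₁ (u * w) * fDens m₂ ν₂ (u * (1 - w)) = hDens m₁ m₂ ν₁ ν₂ u w := by
  have hw' : 0 < 1 - w := by linarith
  have huw : 0 < u * w := mul_pos hu hw
  have huw' : 0 < u * (1 - w) := mul_pos hu hw'
  have hB₁ : Beta (m₁ / 2) (ν₁ / 2) ≠ 0 := (Beta_pos' (by linarith) (by linarith)).ne'
  have hB₂ : Beta (m₂ / 2) (ν₂ / 2) ≠ 0 := (Beta_pos' (by linarith) (by linarith)).ne'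
  rw [fDens, fDens, hDens, if_pos huw, if_pos huw', if_pos ⟨hu, hw, hw1⟩]
  have e₁ : (u * w) ^ (m₁ / 2 - 1) = u ^ (m₁ / 2 - 1) * w ^ (m₁ / 2 - 1) :=
    Real.mul_rpow hu.le hw.le
  have e₂ : (u * (1 - w)) ^ (m₂ / 2 - 1) = u ^ (m₂ / 2 - 1) * (1 - w) ^ (m₂ / 2 - 1) :=
    Real.mul_rpow hu.le hw'.le
  have e₃ : u ^ ((m₁ + m₂) / 2 - 1) = u * (u ^ (m₁ / 2 - 1) * u ^ (m₂ / 2 - 1)) := by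
    rw [← Real.rpow_add hu]
    nth_rewrite 2 [show u = u ^ (1:ℝ) from (Real.rpow_one u).symm]
    rw [← Real.rpow_add hu]
    ring_nf
  have e₄ : m₁ * (u * w) / ν₁ = m₁ * u * w / ν₁ := by ring
  have e₅ : m₂ * (u * (1 - w)) / ν₂ = m₂ * u * (1 - w) / ν₂ := by ring
  rw [e₁, e₂, e₃, e₄, e₅]
  field_simp

/-- If `Y₁, Y₂` are independent with F-densities `f_{m₁,ν₁}`, `f_{m₂,ν₂}`, then the pair
`(U, W) = (Y₁ + Y₂, Y₁/(Y₁+Y₂))` has joint density `h(u,w)` with respect to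
two-dimensional Lebesgue measure. -/
theorem joint_density_of_sum_and_ratio
    {Ω : Type*} [MeasureSpace Ω] [IsProbabilityMeasure (ℙ : Measure Ω)]
    (Y₁ Y₂ : Ω → ℝ) (hY₁m : Measurable Y₁) (hY₂m : Measurable Y₂)
    (hindep : IndepFun Y₁ Y₂ ℙ)
    (m₁ m₂ ν₁ ν₂ : ℝ) (hm₁ : 0 < m₁) (hm₂ : 0 < m₂) (hν₁ : 0 < ν₁) (hν₂ : 0 < ν₂)
    (hY₁ : Measure.map Y₁ ℙ = volume.withDensity (fun y => ENNReal.ofReal (fDens m₁ ν₁ y)))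
    (hY₂ : Measure.map Y₂ ℙ = volume.withDensity (fun y => ENNReal.ofReal (fDens m₂ ν₂ y))) :
    Measure.map (fun ω => (Y₁ ω + Y₂ ω, Y₁ ω / (Y₁ ω + Y₂ ω))) ℙ =
      (volume : Measure (ℝ × ℝ)).withDensity
        (fun p => ENNReal.ofReal (hDens m₁ m₂ ν₁ ν₂ p.1 p.2)) := by
  -- notation
  set f₁ : ℝ → ℝ≥0∞ := fun y => ENNReal.ofReal (fDens m₁ ν₁ y) with hf₁def
  set f₂ : ℝ → ℝ≥0∞ := fun y => ENNReal.ofReal (fDens m₂ ν₂ y) with hf₂def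
  have hf₁ : Measurable f₁ := (fDens_measurable m₁ ν₁).ennreal_ofReal
  have hf₂ : Measurable f₂ := (fDens_measurable m₂ ν₂).ennreal_ofReal
  haveI : IsProbabilityMeasure (volume.withDensity f₁) :=
    hY₁ ▸ Measure.isProbabilityMeasure_map hY₁m.aemeasurable
  haveI : IsProbabilityMeasure (volume.withDensity f₂) :=
    hY₂ ▸ Measure.isProbabilityMeasure_map hY₂m.aemeasurable
  set T : ℝ × ℝ → ℝ × ℝ := fun p => (p.1 + p.2, p.1 / (p.1 + p.2)) with hTdef
  have hT : Measurable T :=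
    (measurable_fst.add measurable_snd).prodMk
      (measurable_fst.div (measurable_fst.add measurable_snd))
  -- the joint law of (Y₁, Y₂)
  have hpair : Measure.map (fun ω => (Y₁ ω, Y₂ ω)) ℙ =
      ((volume : Measure ℝ).prod volume).withDensity (fun p => f₁ p.1 * f₂ p.2) := by
    rw [(indepFun_iff_map_prod_eq_prod_map_map hY₁m.aemeasurable hY₂m.aemeasurable).mp hindep,
      hY₁, hY₂, prod_withDensity_aux hf₁ hf₂]
  have hcomp : Measure.map (fun ω => (Y₁ ω + Y₂ ω, Y₁ ω / (Y₁ ω + Y₂ ω))) ℙ =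
      Measure.map T (Measure.map (fun ω => (Y₁ ω, Y₂ ω)) ℙ) := by
    rw [Measure.map_map hT (hY₁m.prodMk hY₂m)]
    rfl
  rw [hcomp, hpair]
  -- sets
  set s : Set (ℝ × ℝ) := Ioi (0:ℝ) ×ˢ Ioi (0:ℝ) with hsdef
  set t : Set (ℝ × ℝ) := Ioi (0:ℝ) ×ˢ Ioo (0:ℝ) 1 with htdef
  have hsm : MeasurableSet s := measurableSet_Ioi.prod measurableSet_Ioi
  have htm : MeasurableSet t := measurableSet_Ioi.prod measurableSet_Ioo
  have hSm : Measurable Sfun :=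
    (measurable_fst.mul measurable_snd).prodMk
      (measurable_fst.mul (measurable_const.sub measurable_snd))
  have hSimg : Sfun '' t = s := by
    ext p
    constructor
    · rintro ⟨⟨u, w⟩, ⟨hu, hw0, hw1⟩, rfl⟩
      exact ⟨mul_pos hu hw0, mul_pos hu (sub_pos.mpr hw1)⟩
    · rintro ⟨hx, hy⟩
      simp only [mem_Ioi] at hx hy
      refine ⟨(p.1 + p.2, p.1 / (p.1 + p.2)), ⟨by simp [mem_Ioi]; linarith,
        div_pos hx (by linarith), by
          rw [div_lt_one (by linarith)]; linarith⟩, ?_⟩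
      have hsum : p.1 + p.2 ≠ 0 := by positivity
      have e1 : (p.1 + p.2) * (p.1 / (p.1 + p.2)) = p.1 := by field_simp
      have e2 : (p.1 + p.2) * (1 - p.1 / (p.1 + p.2)) = p.2 := by field_simp; ring
      simp only [Sfun]
      exact Prod.ext e1 e2
  have hSinj : InjOn Sfun t := by
    rintro ⟨u, w⟩ ⟨hu, hw0, hw1⟩ ⟨u', w'⟩ ⟨hu', hw0', hw1'⟩ h
    simp only [Sfun, Prod.mk.injEq] at h
    obtain ⟨h1, h2⟩ := h
    have hu_eq : u = u' := by nlinarith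
    subst hu_eq
    have : w = w' := by
      have := mul_left_cancel₀ (ne_of_gt (hu : (0:ℝ) < u)) h1
      exact this
    simp [this]
  have hTS : ∀ q ∈ t, T (Sfun q) = q := by
    rintro ⟨u, w⟩ ⟨hu, hw0, hw1⟩
    simp only [mem_Ioi] at hu
    have hsum : u * w + u * (1 - w) = u := by ring
    simp only [T, Sfun, hsum]
    ext
    · rfl
    · simp only
      rw [mul_comm, mul_div_assoc, div_self (ne_of_gt hu), mul_one]
  -- prove equality of measures
  ext A hA
  rw [Measure.map_apply hT hA, withDensity_apply _ (hT hA), withDensity_apply _ hA]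
  -- restrict to the support s
  have hFz : ∀ p : ℝ × ℝ, p ∉ s → f₁ p.1 * f₂ p.2 = 0 := by
    rintro ⟨x, y⟩ hp
    simp only [hsdef, mem_prod, mem_Ioi, not_and_or, not_lt] at hp
    rcases hp with h | h
    · simp [hf₁def, fDens_eq_zero (not_lt.mpr h)]
    · simp [hf₂def, fDens_eq_zero (not_lt.mpr h)]
  have hHz : ∀ p : ℝ × ℝ, p ∉ t → ENNReal.ofReal (hDens m₁ m₂ ν₁ ν₂ p.1 p.2) = 0 := by
    rintro ⟨u, w⟩ hp
    have : ¬ (0 < u ∧ 0 < w ∧ w < 1) := by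
      simpa [htdef, mem_prod, mem_Ioi, mem_Ioo, and_assoc] using hp
    simp [hDens, this]
  have restrict_lem : ∀ (B : Set (ℝ × ℝ)), MeasurableSet B →
      ∀ (G : ℝ × ℝ → ℝ≥0∞) (C : Set (ℝ × ℝ)), MeasurableSet C → (∀ p ∉ C, G p = 0) →
      ∫⁻ p in B, G p ∂(volume : Measure (ℝ × ℝ)) = ∫⁻ p in B ∩ C, G p := by
    intro B hB G C hC hG
    rw [← lintegral_indicator hB, ← lintegral_indicator (hB.inter hC)]
    congr 1
    funext p
    by_cases hpC : p ∈ C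
    · by_cases hpB : p ∈ B <;> simp [indicator_apply, hpB, hpC]
    · by_cases hpB : p ∈ B <;> simp [indicator_apply, hpB, hpC, hG p hpC]
  have hvol : ((volume : Measure ℝ).prod volume) = (volume : Measure (ℝ × ℝ)) :=
    (MeasureTheory.Measure.volume_eq_prod ℝ ℝ).symm
  rw [hvol]
  rw [restrict_lem _ (hT hA) _ s hsm hFz,
    restrict_lem _ hA _ t htm (fun p hp => hHz p hp)]
  -- change of variables
  have himg : T ⁻¹' A ∩ s = Sfun '' (t ∩ Sfun ⁻¹' (T ⁻¹' A)) := by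
    rw [image_inter_preimage, hSimg, inter_comm]
  have hBA : t ∩ Sfun ⁻¹' (T ⁻¹' A) = A ∩ t := by
    ext q
    constructor
    · rintro ⟨hqt, hqA⟩
      refine ⟨?_, hqt⟩
      have := hTS q hqt
      simpa [this] using hqA
    · rintro ⟨hqA, hqt⟩
      refine ⟨hqt, ?_⟩
      simp only [mem_preimage, hTS q hqt]
      exact hqA
  rw [himg, hBA]
  have hderiv : ∀ q ∈ A ∩ t, HasFDerivWithinAt Sfun (Sder q) (A ∩ t) q :=
    fun q _ => (hasFDerivAt_Sfun q).hasFDerivWithinAt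
  rw [lintegral_image_eq_lintegral_abs_det_fderiv_mul volume (hA.inter htm) hderiv
    (hSinj.mono inter_subset_right) (fun p => f₁ p.1 * f₂ p.2)]
  refine setLIntegral_congr_fun (hA.inter htm) ?_
  rintro ⟨u, w⟩ ⟨hqA, hu, hw0, hw1⟩
  simp only [mem_Ioi] at hu
  have hdet : |(Sder (u, w)).det| = u := by
    rw [Sder_det]; simp [abs_of_pos hu]
  beta_reduce
  rw [hdet]
  simp only [Sfun, hf₁def, hf₂def]
  rw [← ENNReal.ofReal_mul (fDens_nonneg hm₁ hν₁ _), ← ENNReal.ofReal_mul hu.le]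
  congr 1
  rw [← mul_assoc]
  exact key_identity hm₁ hm₂ hν₁ hν₂ hu hw0 hw1
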